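/- Let H be a 2N×2N real symmetric invertible matrix. Let Σ_pp, Σ_qq, Σ_pq be N×N diagonal matrices such that Σ_p := [[Σ_pp, Σ_pq],[Σ_pq, Σ_qq]] is positive definite, and let Σ_nv, Σ_nθ, Σ_nvθ be N×N diagonal matrices such that Σ_n := [[Σ_nv, Σ_nvθ],[Σ_nvθ, Σ_nθ]] is positive definite. For each i set σ_n^i := Σ_nv(i,i) + Σ_nθ(i,i) + √((Σ_nv(i,i) − Σ_nθ(i,i))² + 4·Σ_nvθ(i,i)²) and σ_p^i := Σ_pp(i,i) + Σ_qq(i,i) − √((Σ_pp(i,i) − Σ_qq(i,i))² + 4·Σ_pq(i,i)²). Let Σ_v := H⁻¹ Σ_p H⁻¹ and Δ := (Σ_v + Σ_n)⁻¹ − Σ_v⁻¹. Then for all indices i, j: |Δ(i,j)| ≤ 2·(λmax(H²))² · (max_i σ_n^i) / (min_i σ_p^i)², where λmax(A) denotes the largest eigenvalue of a real symmetric matrix A. -/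

import Mathlib

open Matrix

/-- The largest eigenvalue of a real symmetric (Hermitian) matrix. -/
noncomputable def maxEig {n : Type*} [Fintype n] [DecidableEq n]
    {A : Matrix n n ℝ} (hA : A.IsHermitian) : ℝ := ⨆ k, hA.eigenvalues k

set_option linter.unusedSectionVars false
set_option linter.unusedVariables false

section helpers

variable {n : Type*} [Fintype n] [DecidableEq n]

lemma dot_self_nonneg (x : n → ℝ) : 0 ≤ x ⬝ᵥ x :=
  Finset.sum_nonneg fun i _ => mul_self_nonneg _

lemma dot_sq_le (x y : n → ℝ) : (x ⬝ᵥ y) ^ 2 ≤ (x ⬝ᵥ x) * (y ⬝ᵥ y) := by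
  simpa [dotProduct, sq] using
    Finset.sum_mul_sq_le_sq_mul_sq Finset.univ x y

lemma mulVec_dot (M : Matrix n n ℝ) (a b : n → ℝ) :
    M *ᵥ a ⬝ᵥ b = a ⬝ᵥ (Mᵀ *ᵥ b) := by
  rw [dotProduct_comm, dotProduct_mulVec, ← mulVec_transpose, dotProduct_comm]

lemma herm_dot {B : Matrix n n ℝ} (hB : B.IsHermitian) (a b : n → ℝ) :
    B *ᵥ a ⬝ᵥ b = B *ᵥ b ⬝ᵥ a := by
  have hBt : Bᵀ = B := by
    rw [← conjTranspose_eq_transpose_of_trivial]; exact hB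
  rw [mulVec_dot, hBt, dotProduct_comm]

lemma quad_le_maxEig {A : Matrix n n ℝ} (hA : A.IsHermitian) (x : n → ℝ) :
    A *ᵥ x ⬝ᵥ x ≤ maxEig hA * (x ⬝ᵥ x) := by
  have hbdd : BddAbove (Set.range hA.eigenvalues) := (Set.finite_range _).bddAbove
  set U : Matrix n n ℝ := (hA.eigenvectorUnitary : Matrix n n ℝ) with hU
  have hUU : U * star U = 1 := (Matrix.mem_unitaryGroup_iff).mp hA.eigenvectorUnitary.2
  have hst : star U = Uᵀ := by
    simp [Matrix.star_eq_conjTranspose, conjTranspose_eq_transpose_of_trivial]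
  set y : n → ℝ := star U *ᵥ x with hy
  have hxy : x ⬝ᵥ x = y ⬝ᵥ y := by
    rw [hy, mulVec_dot, mulVec_mulVec, hst, transpose_transpose, ← hst, hUU, one_mulVec]
  have hAx : A *ᵥ x = U *ᵥ (Matrix.diagonal hA.eigenvalues *ᵥ y) := by
    conv_lhs => rw [hA.spectral_theorem]
    simp only [hy, ← mulVec_mulVec]
    norm_num
    simp only [hU, Matrix.mul_assoc]
  rw [hAx, mulVec_dot, ← hst, ← hy, hxy]
  have hthis : Matrix.diagonal hA.eigenvalues *ᵥ y ⬝ᵥ y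
      = ∑ k, hA.eigenvalues k * (y k * y k) := by
    simp [dotProduct, mulVec_diagonal, mul_assoc]
  rw [dotProduct_comm y, hthis]
  have hyy : y ⬝ᵥ y = ∑ k, y k * y k := rfl
  rw [hyy, Finset.mul_sum]
  exact Finset.sum_le_sum fun k _ =>
    mul_le_mul_of_nonneg_right (le_ciSup hbdd k) (mul_self_nonneg _)

/-- If `B ⪰ c·I` then `‖Bx‖² ≥ c²‖x‖²`. -/
lemma normsq_mulVec_ge {B : Matrix n n ℝ} {c : ℝ} (hc : 0 ≤ c)
    (h : ∀ x, c * (x ⬝ᵥ x) ≤ B *ᵥ x ⬝ᵥ x) (x : n → ℝ) :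
    c ^ 2 * (x ⬝ᵥ x) ≤ (B *ᵥ x) ⬝ᵥ (B *ᵥ x) := by
  rcases (dot_self_nonneg x).eq_or_lt with h0 | h0
  · rw [← h0]; simpa using dot_self_nonneg (B *ᵥ x)
  · have h1 := h x
    have h2 : (B *ᵥ x ⬝ᵥ x) ^ 2 ≤ ((B *ᵥ x) ⬝ᵥ (B *ᵥ x)) * (x ⬝ᵥ x) := dot_sq_le _ _
    have h3 : 0 ≤ c * (x ⬝ᵥ x) := mul_nonneg hc h0.le
    nlinarith [sq_nonneg (B *ᵥ x ⬝ᵥ x)]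

lemma isUnit_of_lb {B : Matrix n n ℝ} (hB : B.IsHermitian) {c : ℝ} (hc : 0 < c)
    (h : ∀ x, c * (x ⬝ᵥ x) ≤ B *ᵥ x ⬝ᵥ x) : IsUnit B := by
  refine Matrix.PosDef.isUnit (Matrix.PosDef.of_dotProduct_mulVec_pos hB fun x hx => ?_)
  have hxx : 0 < x ⬝ᵥ x :=
    (dot_self_nonneg x).lt_of_ne' (fun h0 => hx (dotProduct_self_eq_zero.mp h0))
  calc (0:ℝ) < c * (x ⬝ᵥ x) := by positivity
    _ ≤ B *ᵥ x ⬝ᵥ x := h x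
    _ = dotProduct (star x) (B *ᵥ x) := by rw [dotProduct_comm]; simp

/-- If `B ⪰ c·I`, `c > 0`, then `‖B⁻¹x‖² ≤ c⁻²‖x‖²`. -/
lemma inv_normsq_le {B : Matrix n n ℝ} (hBu : IsUnit B) {c : ℝ} (hc : 0 < c)
    (h : ∀ x, c * (x ⬝ᵥ x) ≤ B *ᵥ x ⬝ᵥ x) (x : n → ℝ) :
    (B⁻¹ *ᵥ x) ⬝ᵥ (B⁻¹ *ᵥ x) ≤ (c⁻¹) ^ 2 * (x ⬝ᵥ x) := by
  have hdet := (Matrix.isUnit_iff_isUnit_det B).mp hBu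
  set z := B⁻¹ *ᵥ x with hz
  have hBz : B *ᵥ z = x := by
    rw [hz, mulVec_mulVec, Matrix.mul_nonsing_inv _ hdet, one_mulVec]
  have h1 := normsq_mulVec_ge hc.le h z
  rw [hBz] at h1
  have hc2 : (0:ℝ) < c ^ 2 := by positivity
  rw [inv_pow]
  rw [← sub_nonneg] at h1 ⊢
  have : (c ^ 2)⁻¹ * (x ⬝ᵥ x) - z ⬝ᵥ z = (c^2)⁻¹ * ((x ⬝ᵥ x) - c^2 * (z ⬝ᵥ z)) := by
    field_simp
  rw [this]
  exact mul_nonneg (by positivity) (by linarith)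

/-- Loewner monotonicity of the inverse, in quadratic-form language. -/
lemma inv_quad_le {A B : Matrix n n ℝ} (hB : B.IsHermitian)
    (hAu : IsUnit A) (hBu : IsUnit B)
    (hBpos : ∀ x, 0 ≤ B *ᵥ x ⬝ᵥ x) (hle : ∀ x, B *ᵥ x ⬝ᵥ x ≤ A *ᵥ x ⬝ᵥ x) (x : n → ℝ) :
    A⁻¹ *ᵥ x ⬝ᵥ x ≤ B⁻¹ *ᵥ x ⬝ᵥ x := by
  have hdetA := (Matrix.isUnit_iff_isUnit_det A).mp hAu
  have hdetB := (Matrix.isUnit_iff_isUnit_det B).mp hBu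
  set u := A⁻¹ *ᵥ x with hu
  set v := B⁻¹ *ᵥ x with hv
  have hAu' : A *ᵥ u = x := by
    rw [hu, mulVec_mulVec, Matrix.mul_nonsing_inv _ hdetA, one_mulVec]
  have hBv : B *ᵥ v = x := by
    rw [hv, mulVec_mulVec, Matrix.mul_nonsing_inv _ hdetB, one_mulVec]
  have key : B *ᵥ (u - v) ⬝ᵥ (u - v) =
      B *ᵥ u ⬝ᵥ u - 2 * (B *ᵥ v ⬝ᵥ u) + B *ᵥ v ⬝ᵥ v := by
    have hsym : B *ᵥ u ⬝ᵥ v = B *ᵥ v ⬝ᵥ u := herm_dot hB u v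
    simp only [mulVec_sub, sub_dotProduct, dotProduct_sub]
    linarith
  have h0 := hBpos (u - v)
  rw [key] at h0
  have h1 : B *ᵥ u ⬝ᵥ u ≤ A *ᵥ u ⬝ᵥ u := hle u
  have h2 : A *ᵥ u ⬝ᵥ u = x ⬝ᵥ u := by rw [hAu']
  have h3 : B *ᵥ v ⬝ᵥ u = x ⬝ᵥ u := by rw [hBv]
  have h4 : B *ᵥ v ⬝ᵥ v = x ⬝ᵥ v := by rw [hBv]
  have h5 : u ⬝ᵥ x = x ⬝ᵥ u := dotProduct_comm _ _
  have h6 : v ⬝ᵥ x = x ⬝ᵥ v := dotProduct_comm _ _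
  rw [← hu, ← hv] at *
  linarith

end helpers

lemma diag_mulVec_apply {N : ℕ} {M : Matrix (Fin N) (Fin N) ℝ} (hM : M.IsDiag)
    (u : Fin N → ℝ) (i : Fin N) : (M *ᵥ u) i = M i i * u i := by
  simp only [mulVec, dotProduct]
  rw [Finset.sum_eq_single i]
  · intro b _ hb; rw [hM (Ne.symm hb), zero_mul]
  · intro h; exact absurd (Finset.mem_univ i) h

lemma blockQuad {N : ℕ} {A B C : Matrix (Fin N) (Fin N) ℝ}
    (hA : A.IsDiag) (hB : B.IsDiag) (hC : C.IsDiag) (x : Fin N ⊕ Fin N → ℝ) :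
    (Matrix.fromBlocks A B B C *ᵥ x) ⬝ᵥ x =
      ∑ i, (A i i * (x (Sum.inl i) * x (Sum.inl i))
        + 2 * B i i * (x (Sum.inl i) * x (Sum.inr i))
        + C i i * (x (Sum.inr i) * x (Sum.inr i))) := by
  have hx : x = Sum.elim (fun i => x (Sum.inl i)) (fun i => x (Sum.inr i)) := by
    funext k; cases k <;> rfl
  set u : Fin N → ℝ := fun i => x (Sum.inl i)
  set v : Fin N → ℝ := fun i => x (Sum.inr i)
  rw [hx, Matrix.fromBlocks_mulVec, sumElim_dotProduct_sumElim]
  simp only [dotProduct, Pi.add_apply]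
  rw [← Finset.sum_add_distrib]
  apply Finset.sum_congr rfl
  intro i _
  simp only [Sum.elim_comp_inl, Sum.elim_comp_inr, Pi.add_apply, Sum.elim_inl, Sum.elim_inr,
    diag_mulVec_apply hA, diag_mulVec_apply hB, diag_mulVec_apply hC]
  ring

lemma blockQuad_single {N : ℕ} {A B C : Matrix (Fin N) (Fin N) ℝ}
    (hA : A.IsDiag) (hB : B.IsDiag) (hC : C.IsDiag) (i : Fin N) (s t : ℝ) :
    (Matrix.fromBlocks A B B C *ᵥ (Sum.elim (Pi.single i s) (Pi.single i t))) ⬝ᵥ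
      (Sum.elim (Pi.single i s) (Pi.single i t)) =
      A i i * (s * s) + 2 * B i i * (s * t) + C i i * (t * t) := by
  rw [blockQuad hA hB hC]
  rw [Finset.sum_eq_single i]
  · simp
  · intro b _ hb
    simp [Sum.elim_inl, Sum.elim_inr, Pi.single_eq_of_ne hb]
  · intro h; exact absurd (Finset.mem_univ i) h

/-- The quadratic form of a 2×2 symmetric matrix is bounded below by its least eigenvalue. -/
lemma quad2_lower (a b c u v : ℝ) :
    (a + c - Real.sqrt ((a - c) ^ 2 + 4 * b ^ 2)) / 2 * (u * u + v * v) ≤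
      a * (u * u) + 2 * b * (u * v) + c * (v * v) := by
  set s := Real.sqrt ((a - c) ^ 2 + 4 * b ^ 2) with hs
  have hs0 : 0 ≤ s := Real.sqrt_nonneg _
  have hs2 : s ^ 2 = (a - c) ^ 2 + 4 * b ^ 2 := Real.sq_sqrt (by positivity)
  nlinarith [sq_nonneg (2*(a-c)*(u*v) - 2*b*(u*u - v*v)),
    mul_nonneg hs0 (add_nonneg (mul_self_nonneg u) (mul_self_nonneg v)),
    sq_nonneg (u*u + v*v)]

lemma quad2_upper (a b c u v : ℝ) :
    a * (u * u) + 2 * b * (u * v) + c * (v * v) ≤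
      (a + c + Real.sqrt ((a - c) ^ 2 + 4 * b ^ 2)) / 2 * (u * u + v * v) := by
  set s := Real.sqrt ((a - c) ^ 2 + 4 * b ^ 2) with hs
  have hs0 : 0 ≤ s := Real.sqrt_nonneg _
  have hs2 : s ^ 2 = (a - c) ^ 2 + 4 * b ^ 2 := Real.sq_sqrt (by positivity)
  nlinarith [sq_nonneg (2*(a-c)*(u*v) - 2*b*(u*u - v*v)),
    mul_nonneg hs0 (add_nonneg (mul_self_nonneg u) (mul_self_nonneg v)),
    sq_nonneg (u*u + v*v)]

/-- block positivity facts from PD of the block matrix -/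
lemma block_facts {N : ℕ} {A B C : Matrix (Fin N) (Fin N) ℝ}
    (hA : A.IsDiag) (hB : B.IsDiag) (hC : C.IsDiag)
    (hPD : (Matrix.fromBlocks A B B C).PosDef) (i : Fin N) :
    0 < A i i ∧ 0 < C i i ∧ (B i i) ^ 2 < A i i * C i i := by
  have hq : ∀ s t : ℝ, ¬(s = 0 ∧ t = 0) →
      0 < A i i * (s * s) + 2 * B i i * (s * t) + C i i * (t * t) := by
    intro s t hst
    rw [← blockQuad_single hA hB hC i s t]
    have hx : (Sum.elim (Pi.single i s) (Pi.single i t) : Fin N ⊕ Fin N → ℝ) ≠ 0 := by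
      intro h0
      apply hst
      constructor
      · have := congrFun h0 (Sum.inl i); simpa using this
      · have := congrFun h0 (Sum.inr i); simpa using this
    have := hPD.dotProduct_mulVec_pos hx
    rw [dotProduct_comm] at this
    simpa using this
  have ha : 0 < A i i := by have := hq 1 0 (by simp); simpa using this
  have hc : 0 < C i i := by have := hq 0 1 (by simp); simpa using this
  refine ⟨ha, hc, ?_⟩
  by_contra hcon
  push_neg at hcon
  have hb0 : B i i ≠ 0 := by
    intro h0; rw [h0] at hcon; nlinarith
  have := hq (B i i) (-(A i i)) (by intro ⟨h1, _⟩; exact hb0 h1)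
  nlinarith

lemma sum_dot {N : ℕ} (x : Fin N ⊕ Fin N → ℝ) :
    x ⬝ᵥ x = ∑ i, (x (Sum.inl i) * x (Sum.inl i) + x (Sum.inr i) * x (Sum.inr i)) := by
  simp [dotProduct, Fintype.sum_sum_type, ← Finset.sum_add_distrib]

lemma block_quad_ge {N : ℕ} {A B C : Matrix (Fin N) (Fin N) ℝ}
    (hA : A.IsDiag) (hB : B.IsDiag) (hC : C.IsDiag) {m : ℝ}
    (hm : ∀ i, m ≤ A i i + C i i - Real.sqrt ((A i i - C i i) ^ 2 + 4 * (B i i) ^ 2))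
    (x : Fin N ⊕ Fin N → ℝ) :
    m / 2 * (x ⬝ᵥ x) ≤ (Matrix.fromBlocks A B B C *ᵥ x) ⬝ᵥ x := by
  rw [blockQuad hA hB hC, sum_dot, Finset.mul_sum]
  apply Finset.sum_le_sum
  intro i _
  have hnn : 0 ≤ x (Sum.inl i) * x (Sum.inl i) + x (Sum.inr i) * x (Sum.inr i) :=
    add_nonneg (mul_self_nonneg _) (mul_self_nonneg _)
  calc m / 2 * _ ≤ (A i i + C i i - Real.sqrt ((A i i - C i i) ^ 2 + 4 * (B i i) ^ 2)) / 2 *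
        (x (Sum.inl i) * x (Sum.inl i) + x (Sum.inr i) * x (Sum.inr i)) := by
        apply mul_le_mul_of_nonneg_right _ hnn
        linarith [hm i]
    _ ≤ _ := quad2_lower _ _ _ _ _

lemma block_quad_le {N : ℕ} {A B C : Matrix (Fin N) (Fin N) ℝ}
    (hA : A.IsDiag) (hB : B.IsDiag) (hC : C.IsDiag) {M : ℝ}
    (hM : ∀ i, A i i + C i i + Real.sqrt ((A i i - C i i) ^ 2 + 4 * (B i i) ^ 2) ≤ M)
    (x : Fin N ⊕ Fin N → ℝ) :
    (Matrix.fromBlocks A B B C *ᵥ x) ⬝ᵥ x ≤ M / 2 * (x ⬝ᵥ x) := by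
  rw [blockQuad hA hB hC, sum_dot, Finset.mul_sum]
  apply Finset.sum_le_sum
  intro i _
  have hnn : 0 ≤ x (Sum.inl i) * x (Sum.inl i) + x (Sum.inr i) * x (Sum.inr i) :=
    add_nonneg (mul_self_nonneg _) (mul_self_nonneg _)
  calc _ ≤ (A i i + C i i + Real.sqrt ((A i i - C i i) ^ 2 + 4 * (B i i) ^ 2)) / 2 *
        (x (Sum.inl i) * x (Sum.inl i) + x (Sum.inr i) * x (Sum.inr i)) := quad2_upper _ _ _ _ _
    _ ≤ M / 2 * _ := by
        apply mul_le_mul_of_nonneg_right _ hnn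
        linarith [hM i]

/-- first part of Corollary 1 of the paper: noise bound when both the
injection covariance `Σ_p` and the noise covariance `Σ_n` have diagonal `N×N` blocks. -/
theorem stmt12 (N : ℕ)
    (H : Matrix (Fin N ⊕ Fin N) (Fin N ⊕ Fin N) ℝ)
    (hH : H.IsHermitian) (hHu : IsUnit H)
    (Spp Sqq Spq Snv Snθ Snvθ : Matrix (Fin N) (Fin N) ℝ)
    (hSpp : Spp.IsDiag) (hSqq : Sqq.IsDiag) (hSpq : Spq.IsDiag)
    (hSnv : Snv.IsDiag) (hSnθ : Snθ.IsDiag) (hSnvθ : Snvθ.IsDiag)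
    (Sp Sn : Matrix (Fin N ⊕ Fin N) (Fin N ⊕ Fin N) ℝ)
    (hSp : Sp = Matrix.fromBlocks Spp Spq Spq Sqq) (hSpd : Sp.PosDef)
    (hSn : Sn = Matrix.fromBlocks Snv Snvθ Snvθ Snθ) (hSnd : Sn.PosDef)
    (σn σp : Fin N → ℝ)
    (hσn : ∀ i, σn i = Snv i i + Snθ i i +
      Real.sqrt ((Snv i i - Snθ i i) ^ 2 + 4 * (Snvθ i i) ^ 2))
    (hσp : ∀ i, σp i = Spp i i + Sqq i i -
      Real.sqrt ((Spp i i - Sqq i i) ^ 2 + 4 * (Spq i i) ^ 2))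
    (Sv : Matrix (Fin N ⊕ Fin N) (Fin N ⊕ Fin N) ℝ) (hSv : Sv = H⁻¹ * Sp * H⁻¹)
    (Δ : Matrix (Fin N ⊕ Fin N) (Fin N ⊕ Fin N) ℝ) (hΔ : Δ = (Sv + Sn)⁻¹ - Sv⁻¹) :
    ∀ i j, |Δ i j| ≤
      2 * (maxEig (hH.pow 2)) ^ 2 * (⨆ i, σn i) / (⨅ i, σp i) ^ 2 := by
  intro i j
  have : Nonempty (Fin N) := ⟨Sum.elim id id i⟩
  set L := maxEig (hH.pow 2) with hL
  set m := ⨅ k, σp k with hm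
  set M := ⨆ k, σn k with hM
  -- positivity of σp and the infimum
  have hσp_pos : ∀ k, 0 < σp k := by
    intro k
    obtain ⟨ha, hc, hb⟩ := block_facts hSpp hSpq hSqq (hSp ▸ hSpd) k
    rw [hσp k]
    have hlt : Real.sqrt ((Spp k k - Sqq k k) ^ 2 + 4 * (Spq k k) ^ 2) < Spp k k + Sqq k k :=
      (Real.sqrt_lt' (by linarith)).mpr (by nlinarith)
    linarith
  obtain ⟨i0, hi0⟩ := Finite.exists_min σp
  have hm_eq : m = σp i0 :=
    le_antisymm (ciInf_le (Set.finite_range σp).bddBelow i0) (le_ciInf hi0)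
  have hm_pos : 0 < m := hm_eq ▸ hσp_pos i0
  have hm_le : ∀ k, m ≤ σp k := fun k => hm_eq ▸ hi0 k
  -- σn and the supremum
  have hσn_pos : ∀ k, 0 < σn k := by
    intro k
    obtain ⟨ha, hc, _⟩ := block_facts hSnv hSnvθ hSnθ (hSn ▸ hSnd) k
    rw [hσn k]
    have := Real.sqrt_nonneg ((Snv k k - Snθ k k) ^ 2 + 4 * (Snvθ k k) ^ 2)
    linarith
  have hM_ge : ∀ k, σn k ≤ M := fun k => le_ciSup (Set.finite_range σn).bddAbove k
  have hM_pos : 0 < M := lt_of_lt_of_le (hσn_pos i0) (hM_ge i0)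
  -- quadratic form bounds for Sp and Sn
  have hSp_ge : ∀ x, m / 2 * (x ⬝ᵥ x) ≤ Sp *ᵥ x ⬝ᵥ x := by
    intro x
    rw [hSp]
    exact block_quad_ge hSpp hSpq hSqq (fun k => (hσp k) ▸ hm_le k) x
  have hSn_le : ∀ x, Sn *ᵥ x ⬝ᵥ x ≤ M / 2 * (x ⬝ᵥ x) := by
    intro x
    rw [hSn]
    exact block_quad_le hSnv hSnvθ hSnθ (fun k => (hσn k) ▸ hM_ge k) x
  have hSn_nonneg : ∀ x, 0 ≤ Sn *ᵥ x ⬝ᵥ x := by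
    intro x
    have := hSnd.posSemidef.dotProduct_mulVec_nonneg x
    rwa [star_trivial, dotProduct_comm] at this
  -- H bounds
  have hHdet := (Matrix.isUnit_iff_isUnit_det H).mp hHu
  have hHL : ∀ x, (H *ᵥ x) ⬝ᵥ (H *ᵥ x) ≤ L * (x ⬝ᵥ x) := by
    intro x
    have h1 : (H *ᵥ x) ⬝ᵥ (H *ᵥ x) = (H ^ 2) *ᵥ x ⬝ᵥ x := by
      rw [herm_dot hH x (H *ᵥ x), mulVec_mulVec, ← pow_two]
    rw [h1]
    exact quad_le_maxEig (hH.pow 2) x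
  have hL_pos : 0 < L := by
    set x0 : Fin N ⊕ Fin N → ℝ := Pi.single (Sum.inl i0) 1 with hx0
    have hx0ne : x0 ≠ 0 := by
      intro h0
      have := congrFun h0 (Sum.inl i0)
      simp [hx0] at this
    have hHx0 : H *ᵥ x0 ≠ 0 := by
      intro h0
      apply hx0ne
      have : H⁻¹ *ᵥ (H *ᵥ x0) = x0 := by
        rw [mulVec_mulVec, Matrix.nonsing_inv_mul _ hHdet, one_mulVec]
      rw [← this, h0, mulVec_zero]
    have h1 : 0 < (H *ᵥ x0) ⬝ᵥ (H *ᵥ x0) :=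
      (dot_self_nonneg _).lt_of_ne' (fun h0 => hHx0 (dotProduct_self_eq_zero.mp h0))
    have h2 := hHL x0
    have h3 : x0 ⬝ᵥ x0 = 1 := by simp [hx0, single_dotProduct]
    rw [h3, mul_one] at h2
    linarith
  -- Hermitian structure
  have hSpH : Sp.IsHermitian := hSpd.1
  have hSnH : Sn.IsHermitian := hSnd.1
  have hHi : H⁻¹.IsHermitian := hH.inv
  have hSvH : Sv.IsHermitian := by
    rw [hSv]
    have := Matrix.isHermitian_mul_mul_conjTranspose H⁻¹ hSpH
    rwa [hHi] at this
  have hAH : (Sv + Sn).IsHermitian := hSvH.add hSnH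
  -- lower bound on Sv quadratic form
  set γ := m / (2 * L) with hγ
  have hγ_pos : 0 < γ := by positivity
  have hSv_ge : ∀ x, γ * (x ⬝ᵥ x) ≤ Sv *ᵥ x ⬝ᵥ x := by
    intro x
    set y := H⁻¹ *ᵥ x with hy
    have h1 : Sv *ᵥ x ⬝ᵥ x = Sp *ᵥ y ⬝ᵥ y := by
      rw [hSv, ← mulVec_mulVec, ← mulVec_mulVec, herm_dot hHi (Sp *ᵥ y) x, dotProduct_comm]
    have h2 := hSp_ge y
    have h3 : x ⬝ᵥ x ≤ L * (y ⬝ᵥ y) := by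
      have h4 : H *ᵥ y = x := by
        rw [hy, mulVec_mulVec, Matrix.mul_nonsing_inv _ hHdet, one_mulVec]
      calc x ⬝ᵥ x = (H *ᵥ y) ⬝ᵥ (H *ᵥ y) := by rw [h4]
        _ ≤ L * (y ⬝ᵥ y) := hHL y
    have h5 : γ * (x ⬝ᵥ x) ≤ γ * (L * (y ⬝ᵥ y)) :=
      mul_le_mul_of_nonneg_left h3 hγ_pos.le
    have h6 : γ * (L * (y ⬝ᵥ y)) = m / 2 * (y ⬝ᵥ y) := by
      rw [hγ]; field_simp
    rw [h1]; rw [h6] at h5; linarith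
  have hSv_nonneg : ∀ x, 0 ≤ Sv *ᵥ x ⬝ᵥ x := fun x =>
    le_trans (mul_nonneg hγ_pos.le (dot_self_nonneg x)) (hSv_ge x)
  have hA_ge : ∀ x, γ * (x ⬝ᵥ x) ≤ (Sv + Sn) *ᵥ x ⬝ᵥ x := by
    intro x
    rw [add_mulVec, add_dotProduct]
    linarith [hSv_ge x, hSn_nonneg x]
  have hle_q : ∀ x, Sv *ᵥ x ⬝ᵥ x ≤ (Sv + Sn) *ᵥ x ⬝ᵥ x := by
    intro x
    rw [add_mulVec, add_dotProduct]
    linarith [hSn_nonneg x]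
  -- invertibility
  have hSvu : IsUnit Sv := isUnit_of_lb hSvH hγ_pos hSv_ge
  have hAu : IsUnit (Sv + Sn) := isUnit_of_lb hAH hγ_pos hA_ge
  have hdSv := (Matrix.isUnit_iff_isUnit_det Sv).mp hSvu
  have hdA := (Matrix.isUnit_iff_isUnit_det (Sv + Sn)).mp hAu
  -- the key identity
  have hId : Sv⁻¹ * Sn * (Sv + Sn)⁻¹ = Sv⁻¹ - (Sv + Sn)⁻¹ := by
    calc Sv⁻¹ * Sn * (Sv + Sn)⁻¹ = Sv⁻¹ * ((Sv + Sn) - Sv) * (Sv + Sn)⁻¹ := by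
          rw [add_sub_cancel_left]
      _ = Sv⁻¹ * (Sv + Sn) * (Sv + Sn)⁻¹ - Sv⁻¹ * Sv * (Sv + Sn)⁻¹ := by
          rw [Matrix.mul_sub, Matrix.sub_mul]
      _ = Sv⁻¹ - (Sv + Sn)⁻¹ := by
          rw [Matrix.mul_assoc, Matrix.mul_nonsing_inv _ hdA, Matrix.mul_one,
            Matrix.nonsing_inv_mul _ hdSv, Matrix.one_mul]
  -- quadratic form of -Δ
  have hΔq : ∀ x, Sv⁻¹ *ᵥ x ⬝ᵥ x - (Sv + Sn)⁻¹ *ᵥ x ⬝ᵥ x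
      = Sn *ᵥ ((Sv + Sn)⁻¹ *ᵥ x) ⬝ᵥ (Sv⁻¹ *ᵥ x) := by
    intro x
    have h1 : Sv⁻¹ *ᵥ x ⬝ᵥ x - (Sv + Sn)⁻¹ *ᵥ x ⬝ᵥ x
        = (Sv⁻¹ - (Sv + Sn)⁻¹) *ᵥ x ⬝ᵥ x := by
      rw [sub_mulVec, sub_dotProduct]
    rw [h1, ← hId, ← mulVec_mulVec, ← mulVec_mulVec,
      herm_dot hSvH.inv (Sn *ᵥ ((Sv + Sn)⁻¹ *ᵥ x)) x, dotProduct_comm]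
  -- the uniform quadratic bound
  set K := M / 2 * (γ⁻¹) ^ 2 with hK
  have habs : ∀ x, |Δ *ᵥ x ⬝ᵥ x| ≤ K * (x ⬝ᵥ x) := by
    intro x
    set a := Sv⁻¹ *ᵥ x with ha
    set b := (Sv + Sn)⁻¹ *ᵥ x with hb
    have haa : a ⬝ᵥ a ≤ (γ⁻¹) ^ 2 * (x ⬝ᵥ x) := inv_normsq_le hSvu hγ_pos hSv_ge x
    have hbb : b ⬝ᵥ b ≤ (γ⁻¹) ^ 2 * (x ⬝ᵥ x) := inv_normsq_le hAu hγ_pos hA_ge x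
    have h2ab : 2 * (Sn *ᵥ b ⬝ᵥ a) ≤ Sn *ᵥ a ⬝ᵥ a + Sn *ᵥ b ⬝ᵥ b := by
      have h0 := hSn_nonneg (a - b)
      have hsym := herm_dot hSnH a b
      rw [mulVec_sub, sub_dotProduct, dotProduct_sub, dotProduct_sub] at h0
      linarith
    have hup : Sn *ᵥ b ⬝ᵥ a ≤ K * (x ⬝ᵥ x) := by
      have h1 : Sn *ᵥ a ⬝ᵥ a ≤ M / 2 * ((γ⁻¹) ^ 2 * (x ⬝ᵥ x)) :=
        le_trans (hSn_le a) (mul_le_mul_of_nonneg_left haa (by positivity))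
      have h2 : Sn *ᵥ b ⬝ᵥ b ≤ M / 2 * ((γ⁻¹) ^ 2 * (x ⬝ᵥ x)) :=
        le_trans (hSn_le b) (mul_le_mul_of_nonneg_left hbb (by positivity))
      rw [hK]
      nlinarith
    have hlow : 0 ≤ Sn *ᵥ b ⬝ᵥ a := by
      rw [← hΔq x]
      have := inv_quad_le hSvH hAu hSvu hSv_nonneg hle_q x
      linarith
    have hΔx : Δ *ᵥ x ⬝ᵥ x = -(Sn *ᵥ b ⬝ᵥ a) := by
      rw [hΔ, sub_mulVec, sub_dotProduct, ← hΔq x]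
      ring
    rw [hΔx, abs_neg, abs_of_nonneg hlow]
    exact hup
  -- from quadratic bound to entrywise bound
  have hΔH : Δ.IsHermitian := by
    rw [hΔ]; exact hAH.inv.sub hSvH.inv
  set e : Fin N ⊕ Fin N → ℝ := Pi.single i 1 with he
  set f : Fin N ⊕ Fin N → ℝ := Pi.single j 1 with hf
  have hΔij : Δ *ᵥ f ⬝ᵥ e = Δ i j := by
    simp [he, hf, mulVec_single, dotProduct_single]
  have hexp : Δ *ᵥ (e + f) ⬝ᵥ (e + f) - Δ *ᵥ (e - f) ⬝ᵥ (e - f) = 4 * (Δ *ᵥ f ⬝ᵥ e) := by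
    have hsym := herm_dot hΔH e f
    simp only [mulVec_add, mulVec_sub, add_dotProduct, sub_dotProduct,
      dotProduct_add, dotProduct_sub]
    linarith
  have hpar : (e + f) ⬝ᵥ (e + f) + (e - f) ⬝ᵥ (e - f) = 4 := by
    have he1 : e ⬝ᵥ e = 1 := by simp [he, single_dotProduct]
    have hf1 : f ⬝ᵥ f = 1 := by simp [hf, single_dotProduct]
    simp only [add_dotProduct, sub_dotProduct, dotProduct_add, dotProduct_sub]
    linarith
  have hbound : |Δ i j| ≤ K := by
    rw [← hΔij]
    have h1 := habs (e + f)
    have h2 := habs (e - f)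
    have h3 : |4 * (Δ *ᵥ f ⬝ᵥ e)| ≤ K * ((e + f) ⬝ᵥ (e + f)) + K * ((e - f) ⬝ᵥ (e - f)) := by
      rw [← hexp]
      calc |Δ *ᵥ (e + f) ⬝ᵥ (e + f) - Δ *ᵥ (e - f) ⬝ᵥ (e - f)|
          ≤ |Δ *ᵥ (e + f) ⬝ᵥ (e + f)| + |Δ *ᵥ (e - f) ⬝ᵥ (e - f)| := abs_sub _ _
        _ ≤ _ := add_le_add h1 h2
    have h4 : K * ((e + f) ⬝ᵥ (e + f)) + K * ((e - f) ⬝ᵥ (e - f)) = 4 * K := by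
      rw [← mul_add, hpar]; ring
    rw [h4] at h3
    have h5 : |4 * (Δ *ᵥ f ⬝ᵥ e)| = 4 * |Δ *ᵥ f ⬝ᵥ e| := by
      rw [abs_mul]; norm_num
    rw [h5] at h3
    linarith
  have hKeq : K = 2 * L ^ 2 * M / m ^ 2 := by
    rw [hK, hγ]
    field_simp
  exact hKeq ▸ hbound
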